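/- For real numbers s ≠ t with α = min{s,t} and any real λ, the function θ_{s,t;λ}(x) = (ψ(x+t)−ψ(x+s))/(t−s) − (1+λ(2x+s+t))/(2(x+s)(x+t)) admits, for x > −α, the integral representation θ_{s,t;λ}(x) = (1/2)∫₀^∞ [tanh((t−s)u/2)/((t−s)tanh(u/2)) − λ] (e^{−su} + e^{−tu}) e^{−xu} du. -/

import Mathlib

open MeasureTheory Real Set Filter Topology

noncomputable def psi : ℝ → ℝ := deriv (fun x => Real.log (Real.Gamma x))

lemma integral_exp_neg_mul_Ioi {b : ℝ} (hb : 0 < b) :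
    ∫ u in Ioi (0 : ℝ), Real.exp (-b * u) = 1 / b := by
  have hderiv : ∀ u ∈ Ici (0:ℝ), HasDerivAt (fun v : ℝ => -Real.exp (-b * v) / b)
      (Real.exp (-b * u)) u := by
    intro u _
    have h1 : HasDerivAt (fun v : ℝ => -b * v) (-b) u := by
      simpa using (hasDerivAt_id u).const_mul (-b)
    have := (h1.exp.neg).div_const b
    simpa [mul_comm, mul_div_assoc, hb.ne'] using this
  have htend : Tendsto (fun v : ℝ => -Real.exp (-b * v) / b) atTop (𝓝 (-0 / b)) := by
    refine Tendsto.div_const (Tendsto.neg ?_) _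
    exact Real.tendsto_exp_atBot.comp (tendsto_id.const_mul_atTop_of_neg (by linarith))
  have := integral_Ioi_of_hasDerivAt_of_tendsto' hderiv (exp_neg_integrableOn_Ioi 0 hb) htend
  simp only [mul_zero, Real.exp_zero, neg_zero, zero_div] at this
  rw [this]
  ring

lemma summable_aux {z y : ℝ} (hz : 0 < z) (hzy : z < y) :
    Summable (fun k : ℕ => 1 / (z + k) - 1 / (y + k)) := by
  have hc : 0 < min z 1 := lt_min hz one_pos
  set c := min z 1 with hcdef
  have hsum : Summable (fun k : ℕ => ((y - z) / c ^ 2) * (1 / ((k : ℝ) + 1) ^ 2)) := by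
    apply Summable.mul_left
    have := (summable_nat_add_iff 1).mpr (Real.summable_one_div_nat_pow.mpr (by norm_num : 1 < 2))
    refine this.congr fun k => ?_
    push_cast
    ring
  refine Summable.of_nonneg_of_le (fun k => ?_) (fun k => ?_) hsum
  · have h1 : 0 < z + (k : ℝ) := by positivity
    have h2 : 0 < y + (k : ℝ) := by have : (0:ℝ) ≤ k := Nat.cast_nonneg k; linarith
    rw [sub_nonneg]
    apply one_div_le_one_div_of_le h1 (by linarith)
  · have h1 : 0 < z + (k : ℝ) := by positivity
    have h2 : 0 < y + (k : ℝ) := by have : (0:ℝ) ≤ k := Nat.cast_nonneg k; linarith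
    have hck : c * ((k : ℝ) + 1) ≤ z + k := by
      have hc1 : c ≤ 1 := min_le_right _ _
      have hcz : c ≤ z := min_le_left _ _
      have : (0:ℝ) ≤ k := Nat.cast_nonneg k
      nlinarith
    have hck' : c * ((k : ℝ) + 1) ≤ y + k := le_trans hck (by linarith)
    have hpos : 0 < c * ((k : ℝ) + 1) := by positivity
    have key : 1 / (z + k) - 1 / (y + k) = (y - z) / ((z + k) * (y + k)) := by
      field_simp; ring
    rw [key]
    have h3 : c ^ 2 * ((k:ℝ) + 1) ^ 2 ≤ (z + k) * (y + k) := by nlinarith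
    rw [div_mul_div_comm, mul_one]
    exact div_le_div_of_nonneg_left (by linarith) (by positivity) h3

section PsiBasic

private noncomputable def f : ℝ → ℝ := Real.log ∘ Real.Gamma

private lemma psi_eq (x : ℝ) : psi x = deriv f x := by
  simp only [psi, f, Function.comp_def]

private lemma f_rec {x : ℝ} (hx : 0 < x) : f (x + 1) = f x + Real.log x := by
  simp only [f, Function.comp_apply, Real.Gamma_add_one hx.ne',
    Real.log_mul hx.ne' (Real.Gamma_pos_of_pos hx).ne', add_comm]

private lemma f_diff {x : ℝ} (hx : 0 < x) : DifferentiableAt ℝ f x := by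
  refine (Real.differentiableAt_Gamma ?_).log (Real.Gamma_ne_zero ?_) <;>
  exact fun m => ne_of_gt (by have := Nat.cast_nonneg (α := ℝ) m; linarith)

lemma psi_rec {x : ℝ} (hx : 0 < x) : psi (x + 1) = psi x + 1 / x := by
  rw [psi_eq, psi_eq, ← deriv_comp_add_const, one_div, ← Real.deriv_log,
    ← deriv_add (f_diff hx) (Real.differentiableAt_log hx.ne')]
  apply Filter.EventuallyEq.deriv_eq
  filter_upwards [eventually_gt_nhds hx] with a ha using f_rec ha

lemma psi_mono {a b : ℝ} (ha : 0 < a) (hab : a ≤ b) : psi a ≤ psi b := by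
  rcases eq_or_lt_of_le hab with rfl | h
  · exact le_refl _
  have hb : 0 < b := lt_trans ha h
  rw [psi_eq, psi_eq]
  exact le_trans
    (Real.convexOn_log_Gamma.deriv_le_slope (mem_Ioi.mpr ha) (mem_Ioi.mpr hb) h (f_diff ha))
    (Real.convexOn_log_Gamma.slope_le_deriv (mem_Ioi.mpr ha) (mem_Ioi.mpr hb) h (f_diff hb))

lemma psi_le_log {b : ℝ} (hb : 0 < b) : psi b ≤ Real.log b := by
  have h := Real.convexOn_log_Gamma.deriv_le_slope (mem_Ioi.mpr hb)
    (mem_Ioi.mpr (by linarith : (0:ℝ) < b + 1)) (by linarith) (f_diff hb)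
  rw [psi_eq]
  refine h.trans (le_of_eq ?_)
  rw [slope_def_field, show (Real.log ∘ Real.Gamma) = f from rfl, f_rec hb,
    show b + 1 - b = (1:ℝ) by ring, div_one, add_sub_cancel_left]

lemma log_le_psi {a : ℝ} (ha : 0 < a) : Real.log a ≤ psi (a + 1) := by
  have h := Real.convexOn_log_Gamma.slope_le_deriv (mem_Ioi.mpr ha)
    (mem_Ioi.mpr (by linarith : (0:ℝ) < a + 1)) (by linarith) (f_diff (by linarith))
  rw [psi_eq]
  refine le_trans (le_of_eq ?_) h
  rw [slope_def_field, show (Real.log ∘ Real.Gamma) = f from rfl, f_rec ha,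
    show a + 1 - a = (1:ℝ) by ring, div_one, add_sub_cancel_left]

lemma psi_add_nat {z : ℝ} (hz : 0 < z) (n : ℕ) :
    psi (z + n) = psi z + ∑ k ∈ Finset.range n, 1 / (z + k) := by
  induction n with
  | zero => simp
  | succ n ih =>
    have h1 : 0 < z + (n : ℝ) := by positivity
    have : z + ((n : ℕ) + 1 : ℕ) = (z + n) + 1 := by push_cast; ring
    rw [this, psi_rec h1, ih, Finset.sum_range_succ]
    ring

end PsiBasic

lemma hasSum_psi_sub {z y : ℝ} (hz : 0 < z) (hzy : z < y) :
    HasSum (fun k : ℕ => 1 / (z + k) - 1 / (y + k)) (psi y - psi z) := by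
  have hy : 0 < y := lt_trans hz hzy
  have hterm : ∀ k : ℕ, 0 ≤ 1 / (z + k) - 1 / (y + k) := by
    intro k
    have h1 : 0 < z + (k : ℝ) := by positivity
    rw [sub_nonneg]
    exact one_div_le_one_div_of_le h1 (by linarith)
  rw [hasSum_iff_tendsto_nat_of_nonneg hterm]
  -- partial sums
  have hpartial : ∀ n : ℕ, ∑ k ∈ Finset.range n, (1 / (z + k) - 1 / (y + k))
      = (psi y - psi z) - (psi (y + n) - psi (z + n)) := by
    intro n
    rw [Finset.sum_sub_distrib, psi_add_nat hz n, psi_add_nat hy n]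
    ring
  simp only [hpartial]
  have hrem : Tendsto (fun n : ℕ => psi (y + n) - psi (z + n)) atTop (𝓝 0) := by
    have hub : Tendsto (fun n : ℕ => Real.log (y + n) - Real.log (z + n - 1)) atTop (𝓝 0) := by
      have hq : Tendsto (fun n : ℕ => 1 + (y - z + 1) / (z + n - 1)) atTop (𝓝 1) := by
        have hd : Tendsto (fun n : ℕ => z + (n : ℝ) - 1) atTop atTop := by
          apply tendsto_atTop_add_const_right
          exact tendsto_atTop_add_const_left _ _ tendsto_natCast_atTop_atTop
        have := Filter.Tendsto.div_atTop (tendsto_const_nhds (x := y - z + 1)) hd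
        simpa using (tendsto_const_nhds (x := (1:ℝ))).add this
      have hlog : Tendsto (fun r : ℝ => Real.log r) (𝓝 1) (𝓝 0) := by
        simpa using (Real.continuousAt_log one_ne_zero).tendsto
      have := hlog.comp hq
      apply this.congr'
      filter_upwards [eventually_gt_atTop (⌈(1 - z)⌉₊ + 1)] with n hn
      have hn1 : (1:ℝ) - z < n := by
        calc (1:ℝ) - z ≤ ⌈(1 - z)⌉₊ := Nat.le_ceil _
        _ < n := by exact_mod_cast Nat.lt_of_succ_lt hn
      have hzn : 0 < z + n - 1 := by linarith
      have hyn : 0 < y + (n:ℝ) := by linarith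
      simp only [Function.comp_apply]
      rw [show 1 + (y - z + 1) / (z + (n:ℝ) - 1) = (y + n) / (z + n - 1) by
            field_simp; ring,
        Real.log_div hyn.ne' hzn.ne']
    have hub0 : Tendsto (fun n : ℕ => (0:ℝ)) atTop (𝓝 0) := tendsto_const_nhds
    refine tendsto_of_tendsto_of_tendsto_of_le_of_le' hub0 hub ?_ ?_
    · filter_upwards with n
      have h1 : 0 < z + (n:ℝ) := by positivity
      have := psi_mono h1 (by linarith : z + (n:ℝ) ≤ y + n)
      linarith
    · filter_upwards [eventually_gt_atTop (⌈(1 - z)⌉₊ + 1)] with n hn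
      have hn1 : (1:ℝ) - z < n := by
        calc (1:ℝ) - z ≤ ⌈(1 - z)⌉₊ := Nat.le_ceil _
        _ < n := by exact_mod_cast Nat.lt_of_succ_lt hn
      have hzn : 0 < z + (n:ℝ) - 1 := by linarith
      have h2 := psi_le_log (show 0 < y + (n:ℝ) by linarith)
      have h3 := log_le_psi hzn
      rw [show z + (n:ℝ) - 1 + 1 = z + n by ring] at h3
      linarith
  have : Tendsto (fun n : ℕ => (psi y - psi z) - (psi (y + n) - psi (z + n))) atTop
      (𝓝 ((psi y - psi z) - 0)) := (tendsto_const_nhds).sub hrem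
  simpa using this

lemma core_nonneg {z y u : ℝ} (hzy : z ≤ y) (hu : 0 < u) :
    0 ≤ (Real.exp (-z * u) - Real.exp (-y * u)) / (1 - Real.exp (-u)) := by
  have hden : 0 < 1 - Real.exp (-u) := by
    have : Real.exp (-u) < 1 := Real.exp_lt_one_iff.mpr (by linarith)
    linarith
  have hnum : Real.exp (-y * u) ≤ Real.exp (-z * u) :=
    Real.exp_le_exp.mpr (by nlinarith)
  exact div_nonneg (by linarith) hden.le

lemma core_le {z y u : ℝ} (hz : 0 < z) (hzy : z < y) (hu : 0 < u) :
    (Real.exp (-z * u) - Real.exp (-y * u)) / (1 - Real.exp (-u))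
      ≤ (y - z) * (1 + 2 / z) * Real.exp (-(z / 2) * u) := by
  have hyz : 0 < y - z := by linarith
  have hden : 0 < 1 - Real.exp (-u) := by
    have : Real.exp (-u) < 1 := Real.exp_lt_one_iff.mpr (by linarith)
    linarith
  rw [div_le_iff₀ hden]
  set E := Real.exp (-(z / 2) * u) with hE
  have he : 0 < E := Real.exp_pos _
  have hnum : Real.exp (-z * u) - Real.exp (-y * u) ≤ (y - z) * u * Real.exp (-z * u) := by
    have hsplit : Real.exp (-y * u) = Real.exp (-z * u) * Real.exp (-(y - z) * u) := by
      rw [← Real.exp_add]; congr 1; ring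
    have h1 : 1 - (y - z) * u ≤ Real.exp (-(y - z) * u) := by
      have := Real.add_one_le_exp (-(y - z) * u)
      linarith
    have hez : 0 < Real.exp (-z * u) := Real.exp_pos _
    rw [hsplit]
    nlinarith
  have hden2 : u / (1 + u) ≤ 1 - Real.exp (-u) := by
    have h1 : 1 + u ≤ Real.exp u := by linarith [Real.add_one_le_exp u]
    have h2 : Real.exp (-u) = (Real.exp u)⁻¹ := Real.exp_neg u
    have h3 : 0 < Real.exp u := Real.exp_pos u
    rw [div_le_iff₀ (by linarith), h2]
    have h4 : (Real.exp u)⁻¹ * (1 + u) ≤ 1 := by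
      rw [inv_mul_le_iff₀ h3]; linarith
    nlinarith [mul_pos (inv_pos.mpr h3) (show (0:ℝ) < 1 + u by linarith)]
  have hRHSfac : 0 ≤ (y - z) * (1 + 2 / z) * E :=
    mul_nonneg (mul_nonneg hyz.le (by positivity)) he.le
  refine hnum.trans ?_
  have hsplit2 : Real.exp (-z * u) = E * E := by
    rw [hE, ← Real.exp_add]; congr 1; ring
  have hue : u * E ≤ 2 / z := by
    have h1 : z / 2 * u ≤ Real.exp (z / 2 * u) := by
      linarith [Real.add_one_le_exp (z / 2 * u)]
    have h2 : E = (Real.exp (z / 2 * u))⁻¹ := by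
      rw [hE, ← Real.exp_neg]; congr 1; ring
    have h3 : 0 < Real.exp (z / 2 * u) := Real.exp_pos _
    rw [h2, div_eq_mul_inv]
    calc u * (Real.exp (z / 2 * u))⁻¹
        = (2 / z) * ((z / 2 * u) * (Real.exp (z / 2 * u))⁻¹) := by field_simp
      _ ≤ (2 / z) * 1 := by
          apply mul_le_mul_of_nonneg_left _ (by positivity)
          rw [mul_inv_le_iff₀ h3]; linarith
      _ = 2 * z⁻¹ := by ring
  have hle1 : E ≤ 1 := Real.exp_le_one_iff.mpr (by nlinarith)
  have h5 : E * (1 + u) ≤ 1 + 2 / z := by nlinarith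
  have hu1 : 0 < 1 + u := by linarith
  have hgoal : (y - z) * u * Real.exp (-z * u) ≤
      (y - z) * (1 + 2 / z) * E * (u / (1 + u)) := by
    rw [hsplit2, show (y - z) * (1 + 2 / z) * E * (u / (1 + u))
      = ((y - z) * (1 + 2 / z) * E * u) / (1 + u) from by ring, le_div_iff₀ hu1]
    have hfac : 0 ≤ (y - z) * u * E := mul_nonneg (mul_nonneg hyz.le hu.le) he.le
    calc (y - z) * u * (E * E) * (1 + u) = ((y - z) * u * E) * (E * (1 + u)) := by ring
      _ ≤ ((y - z) * u * E) * (1 + 2 / z) := mul_le_mul_of_nonneg_left h5 hfac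
      _ = (y - z) * (1 + 2 / z) * E * u := by ring
  exact hgoal.trans (mul_le_mul_of_nonneg_left hden2 hRHSfac)

lemma integrable_core {z y : ℝ} (hz : 0 < z) (hzy : z < y) :
    IntegrableOn (fun u => (Real.exp (-z * u) - Real.exp (-y * u)) / (1 - Real.exp (-u)))
      (Ioi (0:ℝ)) := by
  have hmeas : AEStronglyMeasurable
      (fun u => (Real.exp (-z * u) - Real.exp (-y * u)) / (1 - Real.exp (-u)))
      (volume.restrict (Ioi (0:ℝ))) := by
    apply (ContinuousOn.aestronglyMeasurable ?_ measurableSet_Ioi)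
    apply ContinuousOn.div
    · exact (((continuous_const.mul continuous_id).rexp).sub
        ((continuous_const.mul continuous_id).rexp)).continuousOn
    · exact (continuous_const.sub (continuous_neg.rexp)).continuousOn
    · intro u hu
      have : Real.exp (-u) < 1 := Real.exp_lt_one_iff.mpr (by simpa using hu)
      intro h; rw [sub_eq_zero] at h; linarith [h.symm]
  refine Integrable.mono' ((exp_neg_integrableOn_Ioi 0
     (show (0:ℝ) < z/2 by linarith)).const_mul ((y - z) * (1 + 2 / z))) hmeas ?_
  filter_upwards [ae_restrict_mem measurableSet_Ioi] with u hu
  rw [Real.norm_of_nonneg (core_nonneg hzy.le hu)]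
  exact (core_le hz hzy hu).trans (le_of_eq (by ring))

lemma integral_core {z y : ℝ} (hz : 0 < z) (hzy : z < y) :
    ∫ u in Ioi (0:ℝ), (Real.exp (-z * u) - Real.exp (-y * u)) / (1 - Real.exp (-u))
      = ∑' k : ℕ, (1 / (z + k) - 1 / (y + k)) := by
  have hy : 0 < y := hz.trans hzy
  set F : ℕ → ℝ → ℝ := fun k u => Real.exp (-(z + k) * u) - Real.exp (-(y + k) * u) with hF
  have hzk : ∀ k : ℕ, (0:ℝ) < z + k := fun k => by positivity
  have hyk : ∀ k : ℕ, (0:ℝ) < y + k := fun k => by have := (hzk k); linarith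
  have hint : ∀ k : ℕ, Integrable (F k) (volume.restrict (Ioi (0:ℝ))) := fun k =>
    (exp_neg_integrableOn_Ioi 0 (hzk k)).sub (exp_neg_integrableOn_Ioi 0 (hyk k))
  have hval : ∀ k : ℕ, ∫ u in Ioi (0:ℝ), F k u = 1 / (z + k) - 1 / (y + k) := by
    intro k
    rw [integral_sub (exp_neg_integrableOn_Ioi 0 (hzk k)) (exp_neg_integrableOn_Ioi 0 (hyk k)),
      integral_exp_neg_mul_Ioi (hzk k), integral_exp_neg_mul_Ioi (hyk k)]
  have hnonneg : ∀ k : ℕ, ∀ u ∈ Ioi (0:ℝ), 0 ≤ F k u := by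
    intro k u hu
    have : Real.exp (-(y + k) * u) ≤ Real.exp (-(z + k) * u) := by
      apply Real.exp_le_exp.mpr
      have : (0:ℝ) < u := hu
      nlinarith
    simpa [hF, sub_nonneg] using this
  have hnorm : ∀ k : ℕ, ∫ u in Ioi (0:ℝ), ‖F k u‖ = 1 / (z + k) - 1 / (y + k) := by
    intro k
    rw [← hval k]
    apply setIntegral_congr_fun measurableSet_Ioi
    intro u hu
    exact Real.norm_of_nonneg (hnonneg k u hu)
  have hsummable : Summable (fun k : ℕ => ∫ u in Ioi (0:ℝ), ‖F k u‖) := by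
    simp_rw [hnorm]
    exact summable_aux hz hzy
  have := integral_tsum_of_summable_integral_norm hint hsummable
  have hpt : ∀ u ∈ Ioi (0:ℝ),
      (Real.exp (-z * u) - Real.exp (-y * u)) / (1 - Real.exp (-u)) = ∑' k : ℕ, F k u := by
    intro u hu
    have hu' : (0:ℝ) < u := hu
    have hr0 : 0 ≤ Real.exp (-u) := (Real.exp_pos _).le
    have hr1 : Real.exp (-u) < 1 := Real.exp_lt_one_iff.mpr (by linarith)
    have hterm : ∀ k : ℕ, F k u
        = (Real.exp (-z * u) - Real.exp (-y * u)) * Real.exp (-u) ^ k := by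
      intro k
      have e1 : Real.exp (-(z + k) * u) = Real.exp (-z * u) * Real.exp (-u) ^ k := by
        rw [← Real.exp_nat_mul, ← Real.exp_add]; congr 1; ring
      have e2 : Real.exp (-(y + k) * u) = Real.exp (-y * u) * Real.exp (-u) ^ k := by
        rw [← Real.exp_nat_mul, ← Real.exp_add]; congr 1; ring
      simp only [hF, e1, e2]; ring
    refine Eq.symm ?_
    calc (∑' k : ℕ, F k u)
        = ∑' k : ℕ, (Real.exp (-z * u) - Real.exp (-y * u)) * Real.exp (-u) ^ k :=
          tsum_congr hterm
      _ = (Real.exp (-z * u) - Real.exp (-y * u)) * (1 - Real.exp (-u))⁻¹ := by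
          rw [tsum_mul_left, tsum_geometric_of_lt_one hr0 hr1]
      _ = (Real.exp (-z * u) - Real.exp (-y * u)) / (1 - Real.exp (-u)) := by
          rw [div_eq_mul_inv]
  rw [setIntegral_congr_fun measurableSet_Ioi hpt, ← this]
  exact tsum_congr hval

lemma tanh_eq_exp (v : ℝ) :
    Real.tanh v = (1 - Real.exp (-(2 * v))) / (1 + Real.exp (-(2 * v))) := by
  rw [Real.tanh_eq_sinh_div_cosh, Real.sinh_eq, Real.cosh_eq]
  have h1 : Real.exp (-(2 * v)) = Real.exp (-v) * Real.exp (-v) := by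
    rw [← Real.exp_add]; congr 1; ring
  have h2 : Real.exp v * Real.exp (-v) = 1 := by rw [← Real.exp_add]; simp
  have h3 : 0 < Real.exp v := Real.exp_pos v
  have h4 : 0 < Real.exp (-v) := Real.exp_pos _
  have hden : 0 < 1 + Real.exp (-(2 * v)) := by positivity
  have hden2 : 0 < Real.exp v + Real.exp (-v) := by positivity
  rw [show (Real.exp v - Real.exp (-v)) / 2 / ((Real.exp v + Real.exp (-v)) / 2)
      = (Real.exp v - Real.exp (-v)) / (Real.exp v + Real.exp (-v)) from by
        rw [div_div_div_comm]; simp,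
    div_eq_div_iff hden2.ne' hden.ne', h1]
  nlinarith [h2]

lemma pointwise_identity {s t lam x u : ℝ} (hst : s < t) (hu : 0 < u) :
    (Real.tanh ((t - s) * u / 2) / ((t - s) * Real.tanh (u / 2)) - lam) *
        (Real.exp (-s * u) + Real.exp (-t * u)) * Real.exp (-x * u)
      = (1 / (t - s)) * ((Real.exp (-(x + s) * u) - Real.exp (-(x + t) * u)) / (1 - Real.exp (-u)))
        + (1 / (t - s)) *
            ((Real.exp (-(x + s + 1) * u) - Real.exp (-(x + t + 1) * u)) / (1 - Real.exp (-u)))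
        - lam * Real.exp (-(x + s) * u) - lam * Real.exp (-(x + t) * u) := by
  have h1 : Real.tanh ((t - s) * u / 2)
      = (1 - Real.exp (-((t - s) * u))) / (1 + Real.exp (-((t - s) * u))) := by
    rw [tanh_eq_exp]; congr 2 <;> ring_nf
  have h2 : Real.tanh (u / 2) = (1 - Real.exp (-u)) / (1 + Real.exp (-u)) := by
    rw [tanh_eq_exp]; congr 2 <;> ring_nf
  have hB : Real.exp (-t * u) = Real.exp (-((t - s) * u)) * Real.exp (-s * u) := by
    rw [← Real.exp_add]; congr 1; ring
  have hzs : Real.exp (-(x + s) * u) = Real.exp (-x * u) * Real.exp (-s * u) := by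
    rw [← Real.exp_add]; congr 1; ring
  have hzt : Real.exp (-(x + t) * u) =
      Real.exp (-x * u) * (Real.exp (-((t - s) * u)) * Real.exp (-s * u)) := by
    rw [← Real.exp_add, ← Real.exp_add]; congr 1; ring
  have hzs1 : Real.exp (-(x + s + 1) * u) =
      Real.exp (-x * u) * Real.exp (-s * u) * Real.exp (-u) := by
    rw [← Real.exp_add, ← Real.exp_add]; congr 1; ring
  have hzt1 : Real.exp (-(x + t + 1) * u) =
      Real.exp (-x * u) * (Real.exp (-((t - s) * u)) * Real.exp (-s * u)) * Real.exp (-u) := by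
    rw [← Real.exp_add, ← Real.exp_add, ← Real.exp_add]; congr 1; ring
  rw [h1, h2, hB, hzs, hzt, hzs1, hzt1]
  set A := Real.exp (-s * u)
  set X := Real.exp (-x * u)
  set C := Real.exp (-u)
  set R := Real.exp (-((t - s) * u))
  have hts : t - s ≠ 0 := by linarith
  have hRpos : (0:ℝ) < 1 + R := by positivity
  have hCpos : (0:ℝ) < 1 + C := by positivity
  have hC1 : C < 1 := Real.exp_lt_one_iff.mpr (by linarith)
  have hC1' : 1 - C ≠ 0 := by linarith
  field_simp
  ring

theorem main_aux (s t lam x : ℝ) (hst : s < t) (hx : -s < x) :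
    (psi (x + t) - psi (x + s)) / (t - s) -
        (1 + lam * (2 * x + s + t)) / (2 * (x + s) * (x + t)) =
      (1 / 2) * ∫ u in Set.Ioi (0 : ℝ),
        (Real.tanh ((t - s) * u / 2) / ((t - s) * Real.tanh (u / 2)) - lam) *
          (Real.exp (-s * u) + Real.exp (-t * u)) * Real.exp (-x * u) := by
  have hz : 0 < x + s := by linarith
  have hy : 0 < x + t := by linarith
  have hzy : x + s < x + t := by linarith
  have hz1 : 0 < x + s + 1 := by linarith
  have hzy1 : x + s + 1 < x + t + 1 := by linarith
  have hts : t - s ≠ 0 := ne_of_gt (by linarith)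
  have hcong : EqOn
      (fun u => (Real.tanh ((t - s) * u / 2) / ((t - s) * Real.tanh (u / 2)) - lam) *
          (Real.exp (-s * u) + Real.exp (-t * u)) * Real.exp (-x * u))
      (fun u => (1 / (t - s)) *
            ((Real.exp (-(x + s) * u) - Real.exp (-(x + t) * u)) / (1 - Real.exp (-u)))
          + (1 / (t - s)) *
            ((Real.exp (-(x + s + 1) * u) - Real.exp (-(x + t + 1) * u)) / (1 - Real.exp (-u)))
          - lam * Real.exp (-(x + s) * u) - lam * Real.exp (-(x + t) * u)) (Ioi 0) :=
    fun u hu => pointwise_identity hst hu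
  rw [setIntegral_congr_fun measurableSet_Ioi hcong]
  have I1 := (integrable_core hz hzy).const_mul (1 / (t - s))
  have I2 := (integrable_core hz1 hzy1).const_mul (1 / (t - s))
  have I3 := (exp_neg_integrableOn_Ioi 0 hz).const_mul lam
  have I4 := (exp_neg_integrableOn_Ioi 0 hy).const_mul lam
  have I12 : Integrable (fun u : ℝ =>
      (1 / (t - s)) * ((Real.exp (-(x + s) * u) - Real.exp (-(x + t) * u)) / (1 - Real.exp (-u)))
      + (1 / (t - s)) *
        ((Real.exp (-(x + s + 1) * u) - Real.exp (-(x + t + 1) * u)) / (1 - Real.exp (-u))))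
      (volume.restrict (Ioi 0)) := I1.add I2
  have I123 : Integrable (fun u : ℝ =>
      (1 / (t - s)) * ((Real.exp (-(x + s) * u) - Real.exp (-(x + t) * u)) / (1 - Real.exp (-u)))
      + (1 / (t - s)) *
        ((Real.exp (-(x + s + 1) * u) - Real.exp (-(x + t + 1) * u)) / (1 - Real.exp (-u)))
      - lam * Real.exp (-(x + s) * u)) (volume.restrict (Ioi 0)) := I12.sub I3
  rw [integral_sub I123 I4, integral_sub I12 I3, integral_add I1 I2,
    integral_const_mul, integral_const_mul, integral_const_mul, integral_const_mul,
    integral_core hz hzy, integral_core hz1 hzy1, integral_exp_neg_mul_Ioi hz,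
    integral_exp_neg_mul_Ioi hy,
    (hasSum_psi_sub hz hzy).tsum_eq, (hasSum_psi_sub hz1 hzy1).tsum_eq,
    psi_rec hz, psi_rec hy]
  field_simp
  ring

theorem theta_integral_rep (s t lam x : ℝ) (hst : s ≠ t) (hx : -min s t < x) :
    (psi (x + t) - psi (x + s)) / (t - s) -
        (1 + lam * (2 * x + s + t)) / (2 * (x + s) * (x + t)) =
      (1 / 2) * ∫ u in Set.Ioi (0 : ℝ),
        (Real.tanh ((t - s) * u / 2) / ((t - s) * Real.tanh (u / 2)) - lam) *
          (Real.exp (-s * u) + Real.exp (-t * u)) * Real.exp (-x * u) := by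
  rcases lt_or_gt_of_ne hst with h | h
  · exact main_aux s t lam x h (by rwa [min_eq_left h.le] at hx)
  · have hx' : -t < x := by rwa [min_eq_right h.le] at hx
    have key := main_aux t s lam x h hx'
    have e1 : (psi (x + t) - psi (x + s)) / (t - s)
        = (psi (x + s) - psi (x + t)) / (s - t) := by
      rw [← neg_div_neg_eq, neg_sub, neg_sub]
    have e2 : (1 + lam * (2 * x + s + t)) / (2 * (x + s) * (x + t))
        = (1 + lam * (2 * x + t + s)) / (2 * (x + t) * (x + s)) := by ring_nf
    have e3 : ∀ u : ℝ,
        (Real.tanh ((t - s) * u / 2) / ((t - s) * Real.tanh (u / 2)) - lam) *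
            (Real.exp (-s * u) + Real.exp (-t * u)) * Real.exp (-x * u)
        = (Real.tanh ((s - t) * u / 2) / ((s - t) * Real.tanh (u / 2)) - lam) *
            (Real.exp (-t * u) + Real.exp (-s * u)) * Real.exp (-x * u) := by
      intro u
      rw [show (s - t) * u / 2 = -((t - s) * u / 2) by ring, Real.tanh_neg, neg_div, ← div_neg,
        show -((s - t) * Real.tanh (u / 2)) = (t - s) * Real.tanh (u / 2) by ring]
      ring
    rw [e1, e2]
    simp_rw [e3]
    exact key
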